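/- Let (M,g) be a complete Riemannian manifold isometric to a product (N,h) × ℝᵏ, where N is compact. Then every unit-speed line in M is of the form γ(t) = (x, t·v₁ + v₂) for some x ∈ N and v₁, v₂ ∈ ℝᵏ with ‖v₁‖ = 1. -/

import Mathlib

set_option maxHeartbeats 1000000

/-- In the ℓ²-product `N × ℝᵏ` of a compact (Riemannian) metric space `N` with
flat Euclidean space, every unit-speed line is of the form `γ t = (x, t • v₁ + v₂)` with
`‖v₁‖ = 1`. -/
theorem stmt6 {N : Type*} [MetricSpace N] [CompactSpace N] {k : ℕ}
    (γ : ℝ → N × EuclideanSpace ℝ (Fin k))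
    (hline : ∀ s t : ℝ,
      Real.sqrt (dist (γ s).1 (γ t).1 ^ 2 + dist (γ s).2 (γ t).2 ^ 2) = |s - t|) :
    ∃ (x : N) (v₁ v₂ : EuclideanSpace ℝ (Fin k)),
      ‖v₁‖ = 1 ∧ ∀ t : ℝ, γ t = (x, t • v₁ + v₂) := by
  have aux : ∀ a b : ℝ, 0 ≤ a → 0 ≤ b → a ^ 2 ≤ b ^ 2 → a ≤ b := by
    intro a b ha hb h
    nlinarith
  have hsq : ∀ s t : ℝ, dist (γ s).1 (γ t).1 ^ 2 + dist (γ s).2 (γ t).2 ^ 2 = (s - t) ^ 2 := by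
    intro s t
    have h0 : (0:ℝ) ≤ dist (γ s).1 (γ t).1 ^ 2 + dist (γ s).2 (γ t).2 ^ 2 := by positivity
    have h := hline s t
    calc dist (γ s).1 (γ t).1 ^ 2 + dist (γ s).2 (γ t).2 ^ 2
        = Real.sqrt (dist (γ s).1 (γ t).1 ^ 2 + dist (γ s).2 (γ t).2 ^ 2) ^ 2 :=
          (Real.sq_sqrt h0).symm
      _ = |s - t| ^ 2 := by rw [h]
      _ = (s - t) ^ 2 := sq_abs _
  set D := Metric.diam (Set.univ : Set N) with hDdef
  have hDb : ∀ a b : N, dist a b ≤ D := fun a b =>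
    Metric.dist_le_diam_of_mem isCompact_univ.isBounded trivial trivial
  have hD0 : 0 ≤ D := Metric.diam_nonneg
  -- first component is constant
  have key : ∀ s t : ℝ, s < t → (γ s).1 = (γ t).1 := by
    intro s t hst
    by_contra hne
    have hdN : 0 < dist (γ s).1 (γ t).1 := dist_pos.mpr hne
    set T := t - s with hTdef
    have hT : 0 < T := by simp only [hTdef]; linarith
    set e3 := dist (γ s).1 (γ t).1 ^ 2 with he3def
    have he3 : 0 < e3 := by positivity
    have he3D : e3 ≤ D ^ 2 := by
      have h1 := hDb (γ s).1 (γ t).1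
      nlinarith [dist_nonneg (x := (γ s).1) (y := (γ t).1)]
    set dgab := dist (γ s).2 (γ t).2 with hdgabdef
    have hdgab0 : 0 ≤ dgab := dist_nonneg
    have hdgab2 : e3 + dgab ^ 2 = T ^ 2 := by
      have h1 := hsq s t
      have h2 : (s - t) ^ 2 = T ^ 2 := by rw [hTdef]; ring
      rw [h2] at h1
      exact h1
    set R := max D (T * D ^ 2 / e3) with hRdef
    have hRD : D ≤ R := le_max_left _ _
    have hR0 : 0 ≤ R := le_trans hD0 hRD
    have hRe3 : T * D ^ 2 ≤ R * e3 := by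
      have h1 : T * D ^ 2 / e3 ≤ R := le_max_right _ _
      calc T * D ^ 2 = (T * D ^ 2 / e3) * e3 := by field_simp
        _ ≤ R * e3 := mul_le_mul_of_nonneg_right h1 he3.le
    have hd1 : dist (γ (s - R)).2 (γ s).2 ≤ R := by
      have h2 := hsq (s - R) s
      refine aux _ _ dist_nonneg hR0 ?_
      nlinarith [sq_nonneg (dist (γ (s - R)).1 (γ s).1)]
    have hd2 : dist (γ t).2 (γ (t + R)).2 ≤ R := by
      have h2 := hsq t (t + R)
      refine aux _ _ dist_nonneg hR0 ?_
      nlinarith [sq_nonneg (dist (γ t).1 (γ (t + R)).1)]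
    set X := dist (γ (s - R)).2 (γ (t + R)).2 with hXdef
    have hX0 : 0 ≤ X := dist_nonneg
    have heAE : dist (γ (s - R)).1 (γ (t + R)).1 ^ 2 ≤ D ^ 2 := by
      have h1 := hDb (γ (s - R)).1 (γ (t + R)).1
      nlinarith [dist_nonneg (x := (γ (s - R)).1) (y := (γ (t + R)).1)]
    have hXsq : dist (γ (s - R)).1 (γ (t + R)).1 ^ 2 + X ^ 2 = (T + 2 * R) ^ 2 := by
      have h1 := hsq (s - R) (t + R)
      have h2 : (s - R - (t + R)) ^ 2 = (T + 2 * R) ^ 2 := by rw [hTdef]; ring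
      rw [h2] at h1
      exact h1
    have htri : X ≤ R + dgab + R := by
      have h1 := dist_triangle4 (γ (s - R)).2 (γ s).2 (γ t).2 (γ (t + R)).2
      calc X ≤ dist (γ (s - R)).2 (γ s).2 + dist (γ s).2 (γ t).2 + dist (γ t).2 (γ (t + R)).2 := h1
        _ ≤ R + dgab + R := by
            refine add_le_add (add_le_add hd1 le_rfl) hd2
    have hXup : X ^ 2 ≤ (2 * R + dgab) ^ 2 := by
      have h1 : X ≤ 2 * R + dgab := by linarith
      nlinarith
    have hdgabT : dgab ≤ T := aux _ _ hdgab0 hT.le (by nlinarith [hdgab2, he3.le])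
    have hexp : (T + 2 * R) ^ 2 - D ^ 2 ≤ (2 * R + dgab) ^ 2 := by linarith [hXsq, heAE, hXup]
    have hstep : 4 * R * (T - dgab) ≤ D ^ 2 - e3 := by nlinarith [hexp, hdgab2]
    have hstep2 : e3 ≤ 2 * T * (T - dgab) := by nlinarith [sq_nonneg (T - dgab), hdgab2]
    have hA := mul_le_mul_of_nonneg_left hstep hT.le
    have hB := mul_le_mul_of_nonneg_left hstep2 hR0
    have hC := mul_pos hT he3
    have hE : 0 ≤ T * D ^ 2 := mul_nonneg hT.le (sq_nonneg D)
    nlinarith [hA, hB, hC, hE, hRe3]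
  have hconst : ∀ t : ℝ, (γ t).1 = (γ 0).1 := by
    intro t
    rcases lt_trichotomy t 0 with h | h | h
    · exact key t 0 h
    · rw [h]
    · exact (key 0 t h).symm
  have hg : ∀ s t : ℝ, dist (γ s).2 (γ t).2 = |s - t| := by
    intro s t
    have h1 : (γ s).1 = (γ t).1 := (hconst s).trans (hconst t).symm
    have h2 := hsq s t
    rw [h1, dist_self] at h2
    have h3 : dist (γ s).2 (γ t).2 ^ 2 = |s - t| ^ 2 := by rw [sq_abs]; linarith
    calc dist (γ s).2 (γ t).2 = Real.sqrt (dist (γ s).2 (γ t).2 ^ 2) :=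
          (Real.sqrt_sq dist_nonneg).symm
      _ = Real.sqrt (|s - t| ^ 2) := by rw [h3]
      _ = |s - t| := Real.sqrt_sq (abs_nonneg _)
  set G : ℝ → EuclideanSpace ℝ (Fin k) := fun t => (γ t).2 - (γ 0).2 with hGdef
  have hGnorm : ∀ t : ℝ, ‖G t‖ = |t| := by
    intro t
    have h1 := hg t 0
    rw [dist_eq_norm] at h1
    simpa using h1
  have hGsub : ∀ s t : ℝ, ‖G s - G t‖ = |s - t| := by
    intro s t
    have h1 := hg s t
    rw [dist_eq_norm] at h1
    have h2 : G s - G t = (γ s).2 - (γ t).2 := by simp only [hGdef]; abel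
    rw [h2, h1]
  have hinner : ∀ s t : ℝ, (inner ℝ (G s) (G t) : ℝ) = s * t := by
    intro s t
    have h1 := norm_sub_sq_real (G s) (G t)
    rw [hGsub s t, hGnorm s, hGnorm t, sq_abs, sq_abs, sq_abs] at h1
    nlinarith
  refine ⟨(γ 0).1, G 1, (γ 0).2, ?_, ?_⟩
  · rw [hGnorm 1]; norm_num
  · intro t
    have hzero : G t - t • G 1 = 0 := by
      have h1 : ‖G t - t • G 1‖ ^ 2 = 0 := by
        rw [norm_sub_sq_real, real_inner_smul_right, hinner t 1, norm_smul, hGnorm t, hGnorm 1,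
          Real.norm_eq_abs]
        simp only [abs_one, mul_one, sq_abs]
        ring
      have h2 : ‖G t - t • G 1‖ = 0 := by
        have := pow_eq_zero_iff (n := 2) (by norm_num) |>.mp h1
        exact this
      exact norm_eq_zero.mp h2
    have h2 : (γ t).2 = t • G 1 + (γ 0).2 := by
      have h3 : G t = t • G 1 := sub_eq_zero.mp hzero
      have h4 : (γ t).2 - (γ 0).2 = t • G 1 := h3
      linear_combination (norm := abel) h4
    exact Prod.ext (hconst t) h2
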